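/- If X is a normal topological space and κ an infinite cardinal, then every κ-continuous real-valued function f : X → ℝ is strictly κ-continuous; hence for normal spaces the notions of κ-continuity and strict κ-continuity of real-valued functions coincide. -/

import Mathlib

open Cardinal Set

/-- On a normal space, every κ-continuous real-valued function is strictly κ-continuous. -/
theorem kappaContinuous_iff_strictKappaContinuous_of_normal
    {X : Type*} [TopologicalSpace X] [T4Space X]
    (κ : Cardinal) (hκ : Cardinal.aleph0 ≤ κ) (f : X → ℝ)
    (hkappa : ∀ A : Set X, #A ≤ κ → Continuous (A.restrict f)) :
    ∀ A : Set X, #A ≤ κ → ∃ g : X → ℝ, Continuous g ∧ ∀ x ∈ A, g x = f x := by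
  intro A hA
  -- restriction to insert of a point is still small
  have hins : ∀ x : X, ContinuousOn f (insert x A) := by
    intro x
    rw [continuousOn_iff_continuous_restrict]
    refine hkappa _ (le_trans Cardinal.mk_insert_le ?_)
    calc #A + 1 ≤ κ + κ := by
          exact add_le_add hA (le_trans Cardinal.one_le_aleph0 hκ)
      _ = κ := Cardinal.add_eq_self hκ
  -- key: small-set continuity gives open neighborhoods controlling f on A
  have key : ∀ (x : X) (ε : ℝ), 0 < ε → ∃ U : Set X, IsOpen U ∧ x ∈ U ∧
      ∀ a ∈ U ∩ A, dist (f a) (f x) < ε := by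
    intro x ε hε
    have h := (hins x x (mem_insert x A)).tendsto
    rw [Metric.tendsto_nhds] at h
    have h2 := h ε hε
    rw [Filter.eventually_iff, mem_nhdsWithin] at h2
    obtain ⟨U, hUo, hxU, hU⟩ := h2
    exact ⟨U, hUo, hxU, fun a ⟨haU, haA⟩ => hU ⟨haU, mem_insert_of_mem x haA⟩⟩
  -- f is continuous on the closure of A
  have hcont : ContinuousOn f (closure A) := by
    intro x hx
    unfold ContinuousWithinAt
    rw [Metric.tendsto_nhds]
    intro ε hε
    obtain ⟨U, hUo, hxU, hU⟩ := key x (ε / 3) (by linarith)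
    refine Filter.eventually_iff_exists_mem.mpr ⟨U ∩ closure A, ?_, ?_⟩
    · rw [inter_comm]; exact inter_mem_nhdsWithin _ (hUo.mem_nhds hxU)
    · rintro y ⟨hyU, hyA⟩
      obtain ⟨V, hVo, hyV, hV⟩ := key y (ε / 3) (by linarith)
      have hne : (U ∩ V ∩ A).Nonempty :=
        mem_closure_iff.mp hyA _ (hUo.inter hVo) ⟨hyU, hyV⟩
      obtain ⟨a, ⟨haU, haV⟩, haA⟩ := hne
      have h1 : dist (f a) (f y) < ε / 3 := hV a ⟨haV, haA⟩
      have h2 : dist (f a) (f x) < ε / 3 := hU a ⟨haU, haA⟩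
      calc dist (f y) (f x) ≤ dist (f y) (f a) + dist (f a) (f x) := dist_triangle _ _ _
        _ < ε / 3 + ε / 3 := by rw [dist_comm (f y) (f a)]; exact add_lt_add h1 h2
        _ < ε := by linarith
  -- Tietze extension from the closed set `closure A`
  have hclosed : IsClosed (closure A) := isClosed_closure
  have hrest : Continuous ((closure A).restrict f) :=
    continuousOn_iff_continuous_restrict.mp hcont
  obtain ⟨g, hg⟩ := ContinuousMap.exists_restrict_eq hclosed ⟨_, hrest⟩
  refine ⟨g, g.continuous, fun x hx => ?_⟩
  have := congrFun (congrArg ContinuousMap.toFun hg) ⟨x, subset_closure hx⟩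
  simp at this
  exact this
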